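/- Fix g ≥ 2. Let L₂ be the set of tuples (A₁,...,A_g, B₁,...,B_g) ∈ SU(2)^{2g} such that B_i = 1 for 1 ≤ i ≤ g-1 and A_g*B_g*A_g⁻¹*B_g⁻¹ = -1. Then the map from SU(2)^{g-1} to the quotient of L₂ by simultaneous SU(2)-conjugation, sending (A₁,...,A_{g-1}) to the conjugation class of the tuple with these first g-1 entries, A_g = A₀, B_i = 1 for i ≤ g-1, and B_g = B₀, is a bijection. In particular the quotient of L₂ by simultaneous conjugation is in bijection with SU(2)^{g-1}. -/

import Mathlib

open Matrix Complex

/-- `SU2` is the special unitary group of 2×2 complex matrices of determinant 1. -/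
abbrev SU2 := Matrix.specialUnitaryGroup (Fin 2) ℂ

/-- The group structure on the special unitary group, with inverse given by
the conjugate transpose. -/
noncomputable instance instGroupSUC (n : ℕ) : Group (Matrix.specialUnitaryGroup (Fin n) ℂ) where
  inv A := ⟨star A.1, by
    obtain ⟨hu, hd⟩ := Matrix.mem_specialUnitaryGroup_iff.mp A.2
    refine Matrix.mem_specialUnitaryGroup_iff.mpr ⟨Unitary.star_mem hu, ?_⟩
    rw [Matrix.star_eq_conjTranspose, Matrix.det_conjTranspose, hd, star_one]⟩
  inv_mul_cancel A :=
    Subtype.ext (Unitary.star_mul_self_of_mem (Matrix.mem_specialUnitaryGroup_iff.mp A.2).1)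

/-- The element `-1` of `SU(2)`. -/
noncomputable def negOne : SU2 := ⟨-1, by
  refine Matrix.mem_specialUnitaryGroup_iff.mpr ⟨⟨?_, ?_⟩, ?_⟩ <;>
    simp [Matrix.det_neg]⟩

/-- The element `A₀ = diag(i, -i)` of `SU(2)`. -/
noncomputable def A₀ : SU2 := ⟨!![I, 0; 0, -I], by
  refine Matrix.mem_specialUnitaryGroup_iff.mpr ⟨⟨?_, ?_⟩, ?_⟩
  · ext i j
    fin_cases i <;> fin_cases j <;>
      simp [Matrix.mul_apply, Fin.sum_univ_succ, Matrix.conjTranspose_apply]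
  · ext i j
    fin_cases i <;> fin_cases j <;>
      simp [Matrix.mul_apply, Fin.sum_univ_succ, Matrix.conjTranspose_apply]
  · simp [Matrix.det_fin_two_of]⟩

/-- The element `B₀ = [[0,1],[-1,0]]` of `SU(2)`. -/
noncomputable def B₀ : SU2 := ⟨!![0, 1; -1, 0], by
  refine Matrix.mem_specialUnitaryGroup_iff.mpr ⟨⟨?_, ?_⟩, ?_⟩
  · ext i j
    fin_cases i <;> fin_cases j <;>
      simp [Matrix.mul_apply, Fin.sum_univ_succ, Matrix.conjTranspose_apply]
  · ext i j
    fin_cases i <;> fin_cases j <;>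
      simp [Matrix.mul_apply, Fin.sum_univ_succ, Matrix.conjTranspose_apply]
  · simp [Matrix.det_fin_two_of]⟩

@[simp] lemma coe_inv_SU2 (A : SU2) :
    ((A⁻¹ : SU2) : Matrix (Fin 2) (Fin 2) ℂ) = star (A : Matrix (Fin 2) (Fin 2) ℂ) := rfl

/-- The commutator of the standard pair `(A₀, B₀)` is `-1`. -/
lemma commutator_A₀_B₀ : A₀ * B₀ * A₀⁻¹ * B₀⁻¹ = negOne := by
  apply Subtype.ext
  ext i j
  fin_cases i <;> fin_cases j <;>
    simp [A₀, B₀, negOne, Matrix.mul_apply, Matrix.vecMul, dotProduct,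
      Fin.sum_univ_succ, Matrix.conjTranspose_apply]

/-- A tuple `(A₁,…,A_g,B₁,…,B_g)` of elements of `SU(2)`. -/
abbrev SU2Tuple (g : ℕ) := (Fin g → SU2) × (Fin g → SU2)

/-- Two tuples are related iff they are simultaneously conjugate by an element of `SU(2)`. -/
def ConjRel {g : ℕ} (p q : SU2Tuple g) : Prop :=
  ∃ u : SU2, (∀ i, u * p.1 i * u⁻¹ = q.1 i) ∧ (∀ i, u * p.2 i * u⁻¹ = q.2 i)

/-- The last index `g` of a tuple `(A₁,…,A_g,B₁,…,B_g)`. -/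
def lastIdx (g : ℕ) (hg : 2 ≤ g) : Fin g := ⟨g - 1, by omega⟩

/-- The Lagrangian `L₂ = L(H₂°, w₂)` of the paper (equation (1.9)): tuples with
`Bᵢ = 1` for `1 ≤ i ≤ g-1` and `A_g B_g A_g⁻¹ B_g⁻¹ = -1`. -/
def L2set (g : ℕ) (hg : 2 ≤ g) : Set (SU2Tuple g) :=
  {p | (∀ i : Fin g, (i : ℕ) < g - 1 → p.2 i = 1) ∧
    p.1 (lastIdx g hg) * p.2 (lastIdx g hg) *
      (p.1 (lastIdx g hg))⁻¹ * (p.2 (lastIdx g hg))⁻¹ = negOne}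

/-- The standard representative in `L₂` with prescribed first `g-1` entries `A₁,…,A_{g-1}`,
with `A_g = A₀`, `Bᵢ = 1` for `i ≤ g-1` and `B_g = B₀`. -/
noncomputable def stdL2 (g : ℕ) (v : Fin (g - 1) → SU2) : SU2Tuple g :=
  (fun i => if h : (i : ℕ) < g - 1 then v ⟨i, h⟩ else A₀,
   fun i => if (i : ℕ) < g - 1 then 1 else B₀)

lemma stdL2_mem (g : ℕ) (hg : 2 ≤ g) (v : Fin (g - 1) → SU2) : stdL2 g v ∈ L2set g hg := by
  refine ⟨fun i hi => ?_, ?_⟩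
  · simp [stdL2, if_pos hi]
  · have h : ¬ ((g - 1 : ℕ) < g - 1) := lt_irrefl _
    simp only [stdL2, lastIdx, dif_neg h, if_neg h]
    exact commutator_A₀_B₀

section test
variable (A B : SU2)
example : ((A * B : SU2) : Matrix (Fin 2) (Fin 2) ℂ) = A.1 * B.1 := rfl
example : ((1 : SU2) : Matrix (Fin 2) (Fin 2) ℂ) = 1 := rfl
end test

lemma SU2_star_eq (A : SU2) : star A.1 = A.1.adjugate := by
  have hdet : A.1.det = 1 := (Matrix.mem_specialUnitaryGroup_iff.mp A.2).2
  have hu : star A.1 * A.1 = 1 := Unitary.star_mul_self_of_mem (Matrix.mem_specialUnitaryGroup_iff.mp A.2).1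
  have h2 : A.1 * A.1.adjugate = 1 := by rw [Matrix.mul_adjugate, hdet, one_smul]
  calc star A.1 = star A.1 * (A.1 * A.1.adjugate) := by rw [h2, mul_one]
    _ = (star A.1 * A.1) * A.1.adjugate := by rw [mul_assoc]
    _ = A.1.adjugate := by rw [hu, one_mul]

open ComplexConjugate in
lemma SU2_entries (A : SU2) : A.1 1 1 = conj (A.1 0 0) ∧ A.1 1 0 = -conj (A.1 0 1)
    ∧ A.1 0 0 * conj (A.1 0 0) + A.1 0 1 * conj (A.1 0 1) = 1 := by
  have h := SU2_star_eq A
  have e : A.1 = !![A.1 0 0, A.1 0 1; A.1 1 0, A.1 1 1] := by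
    ext i j; fin_cases i <;> fin_cases j <;> rfl
  rw [e, Matrix.adjugate_fin_two] at h
  have h00 := congrFun (congrFun h 0) 0
  have h01 := congrFun (congrFun h 0) 1
  have hdet : A.1.det = 1 := (Matrix.mem_specialUnitaryGroup_iff.mp A.2).2
  rw [e, Matrix.det_fin_two_of] at hdet
  simp [Matrix.conjTranspose_apply] at h00 h01
  have h2 : A.1 1 0 = -conj (A.1 0 1) := by
    have := congrArg conj h01; simpa using this
  refine ⟨h00.symm, h2, ?_⟩
  rw [← h00, h2] at hdet
  linear_combination hdet
open ComplexConjugate in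
noncomputable def mkSU2 (a b : ℂ) (h : a * conj a + b * conj b = 1) : SU2 :=
  ⟨!![a, b; -conj b, conj a], by
    refine Matrix.mem_specialUnitaryGroup_iff.mpr ⟨⟨?_, ?_⟩, ?_⟩
    · ext i j
      fin_cases i <;> fin_cases j <;>
        simp [Matrix.mul_apply, Fin.sum_univ_succ, Matrix.conjTranspose_apply] <;>
        ring_nf <;> linear_combination h
    · ext i j
      fin_cases i <;> fin_cases j <;>
        simp [Matrix.mul_apply, Fin.sum_univ_succ, Matrix.conjTranspose_apply] <;>
        ring_nf <;> linear_combination h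
    · simp [Matrix.det_fin_two_of]; linear_combination h⟩

open ComplexConjugate in
@[simp] lemma mkSU2_coe (a b : ℂ) (h : a * conj a + b * conj b = 1) :
    (mkSU2 a b h).1 = !![a, b; -conj b, conj a] := rfl

lemma central_SU2 (u : SU2) (d : ℂ) (hd : u.1 = d • (1 : Matrix (Fin 2) (Fin 2) ℂ)) (x : SU2) :
    u * x * u⁻¹ = x := by
  apply Subtype.ext
  have : ((u * x * u⁻¹ : SU2) : Matrix (Fin 2) (Fin 2) ℂ) = u.1 * x.1 * (u⁻¹ : SU2).1 := rfl
  rw [this]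
  have hcomm : u.1 * x.1 = x.1 * u.1 := by
    rw [hd, Matrix.smul_mul, Matrix.mul_smul, one_mul, mul_one]
  rw [hcomm, mul_assoc]
  have : u.1 * (u⁻¹ : SU2).1 = 1 := congrArg Subtype.val (mul_inv_cancel u)
  rw [this, mul_one]
lemma mul_coe (x y : SU2) : ((x * y : SU2) : Matrix (Fin 2) (Fin 2) ℂ) = x.1 * y.1 := rfl

lemma trace_zero_of_anticomm (A B : SU2) (hm : A.1 * B.1 = -(B.1 * A.1)) :
    A.1.trace = 0 := by
  have hm' : B.1 * A.1 = -(A.1 * B.1) := by rw [hm, neg_neg]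
  have hBB : B.1 * (B⁻¹ : SU2).1 = 1 := congrArg Subtype.val (mul_inv_cancel B)
  have hBB' : (B⁻¹ : SU2).1 * B.1 = 1 := congrArg Subtype.val (inv_mul_cancel B)
  have key : A.1.trace = -A.1.trace := by
    calc A.1.trace = ((B⁻¹ : SU2).1 * B.1 * A.1).trace := by rw [hBB', one_mul]
      _ = (B.1 * A.1 * (B⁻¹ : SU2).1).trace := (Matrix.trace_mul_cycle _ _ _).symm
      _ = (-(A.1 * B.1) * (B⁻¹ : SU2).1).trace := by rw [hm']
      _ = (-(A.1 * (B.1 * (B⁻¹ : SU2).1))).trace := by rw [Matrix.neg_mul, mul_assoc]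
      _ = -A.1.trace := by rw [hBB, mul_one, Matrix.trace_neg]
  linear_combination key / 2

set_option maxHeartbeats 1600000 in
open ComplexConjugate in
lemma conj_to_A₀ (A : SU2) (htr : A.1.trace = 0) : ∃ u : SU2, u * A * u⁻¹ = A₀ := by
  obtain ⟨e11, e10, enorm⟩ := SU2_entries A
  set a := A.1 0 0 with ha'
  set b := A.1 0 1 with hb'
  have htr' : a + conj a = 0 := by
    have : A.1.trace = a + A.1 1 1 := by
      simp [Matrix.trace, Matrix.diag, Fin.sum_univ_succ, ← ha']
    rw [this, e11] at htr; exact htr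
  have hca : conj a = -a := by linear_combination htr'
  have eA : A.1 = !![a, b; -conj b, -a] := by
    ext i j; fin_cases i <;> fin_cases j <;> simp [e10, e11, hca, ← ha', ← hb']
  by_cases hai : a = I
  · have hb0 : b = 0 := by
      rw [hai] at enorm; simpa using enorm
    refine ⟨1, ?_⟩
    apply Subtype.ext
    rw [mul_coe, mul_coe, inv_one]
    show (1 : Matrix (Fin 2) (Fin 2) ℂ) * A.1 * (1 : SU2).1 = A₀.1
    rw [one_mul, eA, hai, hb0]
    show _ = !![I, 0; 0, -I]
    norm_num
  · set t := a.im with ht'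
    have hare : a.re = 0 := by
      have := congrArg Complex.re htr'
      simp [Complex.add_re, Complex.conj_re] at this
      linarith
    have haI : a = I * (t : ℂ) := by
      apply Complex.ext <;> simp [hare, ht']
    have hIa : I * a = -(t : ℂ) := by
      rw [haI, ← mul_assoc, Complex.I_mul_I]; ring
    have hbc : b * conj b = 1 - (t:ℂ)^2 := by
      linear_combination enorm - a * hca + (a + I*(t:ℂ)) * haI + (t:ℂ)^2 * Complex.I_sq
    have hbcR : Complex.normSq b = 1 - t^2 := by
      have hre := congrArg Complex.re hbc
      rw [Complex.mul_conj] at hre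
      simpa [← Complex.ofReal_pow] using hre
    have htle : t ≤ 1 := by nlinarith [Complex.normSq_nonneg b]
    have htlt : t < 1 := by
      rcases lt_or_eq_of_le htle with h | h
      · exact h
      · exfalso
        apply hai
        rw [haI, h]; simp
    set s := Real.sqrt (2 - 2*t) with hs'
    have hs2R : s^2 = 2 - 2*t := Real.sq_sqrt (by linarith)
    have hspos : 0 < s := Real.sqrt_pos.mpr (by linarith)
    have hsne : (s:ℂ) ≠ 0 := by
      simpa using ne_of_gt hspos
    have hs2 : ((s:ℂ))^2 = 2 + 2*(I*a) := by
      rw [hIa]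
      norm_cast
      rw [hs2R]; push_cast; ring
    set c := conj b with hc'
    have hcc : conj c = b := by simp [hc']
    have hdet2 : -(a*a) + b*c = 1 := by linear_combination enorm - a * hca
    have hnorm : (c/s) * conj (c/s) + ((a - I)/s) * conj ((a - I)/s) = 1 := by
      rw [map_div₀, map_div₀, Complex.conj_ofReal, hcc, map_sub, hca, Complex.conj_I]
      field_simp
      linear_combination (a^2 - c*b - 1) * hs2 + (-1 - 2*I*a) * hdet2 - Complex.I_sq + (s:ℂ)^2 * hdet2 + hs2
    refine ⟨mkSU2 (c/s) ((a-I)/s) hnorm, ?_⟩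
    apply Subtype.ext
    rw [mul_coe, mul_coe, coe_inv_SU2, mkSU2_coe, eA]
    have hconj1 : conj ((a - I)/(s:ℂ)) = (-a + I)/s := by
      rw [map_div₀, Complex.conj_ofReal, map_sub, hca, Complex.conj_I]; ring_nf
    have hconj2 : conj ((c:ℂ)/s) = b/s := by
      rw [map_div₀, Complex.conj_ofReal, hcc]
    have hstar : star (!![c/(s:ℂ), (a-I)/s; -conj ((a-I)/(s:ℂ)), conj ((c:ℂ)/s)]) =
        !![b/(s:ℂ), (-a+I)/s; (-a+I)/s, c/s] := by
      ext i j
      fin_cases i <;> fin_cases j <;>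
        simp [Matrix.conjTranspose_apply, hconj1, hconj2, map_div₀, Complex.conj_ofReal,
          map_sub, hca, hcc, Complex.conj_I] <;> ring
    rw [hstar, Matrix.mul_fin_two, Matrix.mul_fin_two]
    show _ = !![I, 0; 0, -I]
    ext i j
    fin_cases i <;> fin_cases j
    · simp [hca, hcc]; field_simp
      linear_combination (-a + 2*I) * hdet2 - I * hs2 - a * Complex.I_sq
    · simp [hca, hcc]; field_simp
      linear_combination c * hdet2 + c * Complex.I_sq
    · simp [hca, hcc]; field_simp
      linear_combination (-b) * hdet2 - b*Complex.I_sq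
    · simp only [Matrix.cons_val', Matrix.cons_val_one, Matrix.head_cons, Matrix.head_fin_const,
        Matrix.cons_val_fin_one, Matrix.empty_val', Matrix.cons_val_zero, Matrix.of_apply,
        hconj1, hconj2, Fin.mk_one]
      field_simp
      linear_combination I*hs2 + (a - 2*I)*hdet2 + a*Complex.I_sq
lemma negOne_comm (x : SU2) : negOne * x = x * negOne := by
  apply Subtype.ext
  show (-1 : Matrix (Fin 2) (Fin 2) ℂ) * x.1 = x.1 * (-1)
  simp

open ComplexConjugate in
lemma pair_conj (A B : SU2) (h : A * B * A⁻¹ * B⁻¹ = negOne) :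
    ∃ u : SU2, u * A * u⁻¹ = A₀ ∧ u * B * u⁻¹ = B₀ := by
  have hAB : A * B = negOne * (B * A) := by rw [← h]; group
  have hm : A.1 * B.1 = -(B.1 * A.1) := by
    calc A.1 * B.1 = ((A * B : SU2) : Matrix (Fin 2) (Fin 2) ℂ) := rfl
      _ = ((negOne * (B * A) : SU2) : Matrix (Fin 2) (Fin 2) ℂ) := by rw [hAB]
      _ = (-1) * (B.1 * A.1) := rfl
      _ = -(B.1 * A.1) := neg_one_mul _
  have trA := trace_zero_of_anticomm A B hm
  obtain ⟨u₁, hu₁⟩ := conj_to_A₀ A trA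
  set B' := u₁ * B * u₁⁻¹ with hB'
  have key : A₀ * B' = negOne * (B' * A₀) := by
    have h1 : A₀ * B' = u₁ * (A * B) * u₁⁻¹ := by rw [← hu₁, hB']; group
    rw [hAB] at h1
    rw [h1, ← mul_assoc u₁ negOne, ← negOne_comm u₁, hB', ← hu₁]
    group
  have hmB : A₀.1 * B'.1 = -(B'.1 * A₀.1) := by
    calc A₀.1 * B'.1 = ((A₀ * B' : SU2) : Matrix (Fin 2) (Fin 2) ℂ) := rfl
      _ = ((negOne * (B' * A₀) : SU2) : Matrix (Fin 2) (Fin 2) ℂ) := by rw [key]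
      _ = (-1) * (B'.1 * A₀.1) := rfl
      _ = -(B'.1 * A₀.1) := neg_one_mul _
  obtain ⟨e11', e10', enorm'⟩ := SU2_entries B'
  set x := B'.1 0 0 with hx'
  set y := B'.1 0 1 with hy'
  have hx0 : x = 0 := by
    have h00 := congrFun (congrFun hmB 0) 0
    simp [A₀, Matrix.mul_apply, Fin.sum_univ_succ, e10', e11', ← hx', ← hy'] at h00
    have h2 : (2*I) * x = 0 := by linear_combination h00
    rcases mul_eq_zero.mp h2 with h3 | h3
    · exact absurd h3 (by simp [Complex.I_ne_zero])
    · exact h3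
  have hy1 : y * conj y = 1 := by
    rw [hx0] at enorm'; simpa using enorm'
  obtain ⟨d, hd⟩ := IsAlgClosed.exists_pow_nat_eq (conj y) (n := 2) (by norm_num)
  have hnsqy : Complex.normSq y = 1 := by
    have := congrArg Complex.re hy1
    rw [Complex.mul_conj] at this
    exact_mod_cast this
  have hnsqd : Complex.normSq d = 1 := by
    have h1 : Complex.normSq d ^ 2 = 1 := by
      rw [← map_pow Complex.normSq, hd, Complex.normSq_conj, hnsqy]
    nlinarith [Complex.normSq_nonneg d]
  have hdd : d * conj d = 1 := by
    rw [Complex.mul_conj, hnsqd]; simp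
  have hcd : (conj d)^2 = y := by
    have := congrArg conj hd
    rw [map_pow] at this
    simpa using this
  have hw : d * conj d + (0:ℂ) * conj 0 = 1 := by simpa using hdd
  set w := mkSU2 d 0 hw with hwdef
  refine ⟨w * u₁, ?_, ?_⟩
  · have h1 : (w * u₁) * A * (w * u₁)⁻¹ = w * (u₁ * A * u₁⁻¹) * w⁻¹ := by group
    rw [h1, hu₁]
    apply Subtype.ext
    rw [mul_coe, mul_coe, coe_inv_SU2, hwdef, mkSU2_coe]
    show _ = A₀.1
    ext i j
    fin_cases i <;> fin_cases j <;>
      simp [A₀, Matrix.mul_apply, Fin.sum_univ_succ, Matrix.conjTranspose_apply] <;>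
      linear_combination I * hdd
  · have h1 : (w * u₁) * B * (w * u₁)⁻¹ = w * B' * w⁻¹ := by rw [hB']; group
    rw [h1]
    have eB' : B'.1 = !![0, y; -conj y, 0] := by
      ext i j
      fin_cases i <;> fin_cases j <;>
        simp [e10', e11', hx0, ← hx', ← hy']
    apply Subtype.ext
    rw [mul_coe, mul_coe, coe_inv_SU2, hwdef, mkSU2_coe, eB']
    show _ = B₀.1
    ext i j
    fin_cases i <;> fin_cases j <;>
      simp [B₀, Matrix.mul_apply, Fin.sum_univ_succ, Matrix.conjTranspose_apply]
    all_goals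
      first
      | linear_combination (y : ℂ) * hd + hy1
      | linear_combination conj y * hcd + hy1
lemma conjRel_refl {g : ℕ} (p : SU2Tuple g) : ConjRel p p :=
  ⟨1, fun i => by simp, fun i => by simp⟩

lemma conjRel_symm {g : ℕ} {p q : SU2Tuple g} (h : ConjRel p q) : ConjRel q p := by
  obtain ⟨u, h1, h2⟩ := h
  exact ⟨u⁻¹, fun i => by rw [← h1 i]; group, fun i => by rw [← h2 i]; group⟩

lemma conjRel_trans {g : ℕ} {p q r : SU2Tuple g} (h : ConjRel p q) (h' : ConjRel q r) :
    ConjRel p r := by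
  obtain ⟨u, h1, h2⟩ := h
  obtain ⟨v, h3, h4⟩ := h'
  exact ⟨v * u, fun i => by rw [← h3 i, ← h1 i]; group,
    fun i => by rw [← h4 i, ← h2 i]; group⟩

lemma scalar_of_comm (u : SU2) (hA : u * A₀ = A₀ * u) (hB : u * B₀ = B₀ * u) :
    ∃ d : ℂ, u.1 = d • (1 : Matrix (Fin 2) (Fin 2) ℂ) := by
  have hAm : u.1 * A₀.1 = A₀.1 * u.1 := congrArg Subtype.val hA
  have hBm : u.1 * B₀.1 = B₀.1 * u.1 := congrArg Subtype.val hB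
  have h01 := congrFun (congrFun hAm 0) 1
  have h10 := congrFun (congrFun hAm 1) 0
  have hb01 := congrFun (congrFun hBm 0) 1
  simp [A₀, B₀, Matrix.mul_apply, Fin.sum_univ_succ] at h01 h10 hb01
  have hu01 : u.1 0 1 = 0 := by
    have h2 : (2*I) * u.1 0 1 = 0 := by linear_combination -h01
    rcases mul_eq_zero.mp h2 with h3 | h3
    · exact absurd h3 (by simp [Complex.I_ne_zero])
    · exact h3
  have hu10 : u.1 1 0 = 0 := by
    have h2 : (2*I) * u.1 1 0 = 0 := by linear_combination h10
    rcases mul_eq_zero.mp h2 with h3 | h3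
    · exact absurd h3 (by simp [Complex.I_ne_zero])
    · exact h3
  refine ⟨u.1 0 0, ?_⟩
  ext i j
  fin_cases i <;> fin_cases j <;>
    simp [hu01, hu10, Matrix.one_apply]
  · exact hb01.symm

set_option maxHeartbeats 1000000 in
/-- The map from `SU(2)^{g-1}` to the quotient of `L₂` by simultaneous conjugation,
sending `(A₁,…,A_{g-1})` to the class of the tuple with these first `g-1` entries,
`A_g = A₀`, `Bᵢ = 1` for `i ≤ g-1`, and `B_g = B₀`, is a bijection.  In particular
the quotient of `L₂` by simultaneous conjugation is in bijection with `SU(2)^{g-1}`. -/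
theorem L2_quotient_bijective_SU2_pow (g : ℕ) (hg : 2 ≤ g) :
    Function.Bijective
      (fun v : Fin (g - 1) → SU2 =>
        Quot.mk (fun p q : L2set g hg => ConjRel p.1 q.1)
          ⟨stdL2 g v, stdL2_mem g hg v⟩) := by
  have hequiv : Equivalence (fun p q : L2set g hg => ConjRel p.1 q.1) :=
    ⟨fun p => conjRel_refl p.1, fun h => conjRel_symm h, fun h h' => conjRel_trans h h'⟩
  have hlast : ¬((lastIdx g hg : ℕ) < g - 1) := by simp [lastIdx]
  constructor
  · intro v w h
    have h2 := Quot.eqvGen_exact h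
    have h3 := hequiv.eqvGen_iff.mp h2
    obtain ⟨u, ha, hb⟩ := h3
    have hA : u * A₀ * u⁻¹ = A₀ := by
      have := ha (lastIdx g hg)
      simpa [stdL2, dif_neg hlast] using this
    have hB : u * B₀ * u⁻¹ = B₀ := by
      have := hb (lastIdx g hg)
      simpa [stdL2, if_neg hlast] using this
    have hA' : u * A₀ = A₀ * u := by
      have := congrArg (· * u) hA
      simpa [mul_assoc] using this
    have hB' : u * B₀ = B₀ * u := by
      have := congrArg (· * u) hB
      simpa [mul_assoc] using this
    obtain ⟨d, hd⟩ := scalar_of_comm u hA' hB'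
    funext i
    have hi : (i : ℕ) < g - 1 := i.2
    have hiv := ha ⟨i, by omega⟩
    simp only [stdL2, dif_pos hi] at hiv
    rw [central_SU2 u d hd] at hiv
    have : (⟨((⟨(i : ℕ), by omega⟩ : Fin g) : ℕ), hi⟩ : Fin (g-1)) = i := by
      apply Fin.ext; rfl
    rw [this] at hiv
    exact hiv
  · intro q
    induction q using Quot.ind with | _ p => ?_
    obtain ⟨hp1, hp2⟩ := p.2
    obtain ⟨u, huA, huB⟩ := pair_conj _ _ hp2
    refine ⟨fun i => u * p.1.1 ⟨i, by omega⟩ * u⁻¹, ?_⟩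
    apply Quot.sound
    refine ⟨u⁻¹, fun i => ?_, fun i => ?_⟩
    · by_cases hi : (i : ℕ) < g - 1
      · simp only [stdL2, dif_pos hi]
        have : (⟨((⟨(i : ℕ), hi⟩ : Fin (g-1)) : ℕ), by omega⟩ : Fin g) = i := by
          apply Fin.ext; rfl
        rw [this]; group
      · have hieq : i = lastIdx g hg := by
          apply Fin.ext
          have := i.2
          simp only [lastIdx]
          omega
        simp only [stdL2, hieq, dif_neg hlast]
        rw [← huA]; group
    · by_cases hi : (i : ℕ) < g - 1
      · simp only [stdL2, if_pos hi]
        rw [hp1 i hi]; group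
      · have hieq : i = lastIdx g hg := by
          apply Fin.ext
          have := i.2
          simp only [lastIdx]
          omega
        simp only [stdL2, hieq, if_neg hlast]
        rw [← huB]; group
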